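/- Let f ∈ (T_n(R))[x] with coefficients F_k = (f_{ij}^{(k)}), set f_{hj} := Σ_k f_{hj}^{(k)} x^k ∈ R[x], and let C ∈ T_n(R). Then for 1 ≤ i ≤ j ≤ n, the (i,j)-entry of the left evaluation f(C)_ℓ := Σ_k C^k F_k equals Σ_{h=i}^{j} [f_{hj}(C)]_{i h}. -/
import Mathlib


/-- For `f ∈ (Tₙ(R))[x]` with coefficients `F_k` and `C ∈ Tₙ(R)`, and `i ≤ j`,
the `(i,j)`-entry of the left evaluation `f(C)_ℓ = Σ_k C^k F_k` equals
`Σ_{h=i}^{j} [f_{hj}(C)]_{ih}`, where `f_{hj} = Σ_k (F_k)_{hj} x^k ∈ R[x]`. -/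
theorem stmt6 (n : ℕ) (R : Type*) [CommRing R]
    (f : Polynomial (Matrix (Fin n) (Fin n) R))
    (hf : ∀ k, (f.coeff k).BlockTriangular id)
    (C : Matrix (Fin n) (Fin n) R) (hC : C.BlockTriangular id)
    (i j : Fin n) (hij : i ≤ j) :
    (∑ k ∈ f.support, C ^ k * f.coeff k) i j =
      ∑ h ∈ Finset.Icc i j,
        (Polynomial.aeval C
          (∑ k ∈ f.support, Polynomial.C (f.coeff k h j) * Polynomial.X ^ k)) i h := by
  have hCk : ∀ k : ℕ, (C ^ k).BlockTriangular id := by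
    intro k
    induction k with
    | zero => simpa using Matrix.blockTriangular_one
    | succ k ih => rw [pow_succ]; exact ih.mul hC
  simp only [map_sum, map_mul, Polynomial.aeval_C, Polynomial.aeval_X_pow,
    Matrix.sum_apply, Matrix.mul_apply, Algebra.algebraMap_eq_smul_one, smul_mul_assoc,
    one_mul, Matrix.smul_apply, smul_eq_mul]
  rw [Finset.sum_comm, ← Finset.sum_subset (Finset.subset_univ (Finset.Icc i j))]
  · exact Finset.sum_congr rfl fun h _ => Finset.sum_congr rfl fun k _ => mul_comm _ _
  · intro h _ hh
    simp only [Finset.mem_Icc, not_and_or, not_le] at hh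
    refine Finset.sum_eq_zero fun k _ => ?_
    rcases hh with hh | hh
    · rw [hCk k (by simpa using hh), zero_mul]
    · rw [hf k (by simpa using hh), mul_zero]
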